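/- Let T be a finite tree with perfect matching M, xy ∈ M, and suppose all components of T − {x,y} adjacent to y are H_1^2,...,H_l^2 with associated matching edges x_i^2 y_i^2 ∈ M where x_i^2 is adjacent to y. If each (H_i^2)_B^3 has a Hamiltonian (x_i^2, y_i^2)-path P_i^2, then concatenating x, y_1^2 P_1^2 x_1^2, ..., y_l^2 P_l^2 x_l^2, y yields a Hamiltonian (x,y)-path of T_B^3, since consecutive connecting pairs are at odd distance at most 3 in T. -/

import Mathlib

/-- The `t`-th bi-power of a graph `G`: two vertices are adjacent iff their
distance in `G` is odd and at most `t`. -/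
def SimpleGraph.biPower {V : Type*} (G : SimpleGraph V) (t : ℕ) : SimpleGraph V where
  Adj x y := Odd (G.dist x y) ∧ G.dist x y ≤ t
  symm := ⟨fun x y h => by try simp only [] at h ⊢
                           rwa [SimpleGraph.dist_comm]⟩
  loopless := ⟨fun x h => by simp [SimpleGraph.dist_self, Nat.odd_iff] at h⟩

/-- The graph obtained from `G` by deleting the vertices in `s` (keeping the
vertex type, the deleted vertices become isolated). -/
def SimpleGraph.removeVerts {V : Type*} (G : SimpleGraph V) (s : Set V) : SimpleGraph V where
  Adj a b := G.Adj a b ∧ a ∉ s ∧ b ∉ s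
  symm := ⟨fun a b h => by
    try simp only [] at h ⊢
    exact ⟨h.1.symm, h.2.2, h.2.1⟩⟩
  loopless := ⟨fun a h => G.loopless.irrefl a h.1⟩

section Aux

variable {V : Type*} {T : SimpleGraph V}

private lemma tree_path_length (hT : T.IsTree) {u v : V} (p : T.Walk u v) (hp : p.IsPath) :
    p.length = T.dist u v := by
  obtain ⟨q, hq, hql⟩ := hT.isConnected.exists_path_of_dist u v
  have := hT.IsAcyclic.path_unique ⟨p, hp⟩ ⟨q, hq⟩
  rw [show p = q from congrArg Subtype.val this, hql]

private lemma tree_adj_dist_parity [DecidableEq V] (hT : T.IsTree) {u w : V} (h : T.Adj u w) (v : V) :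
    T.dist w v % 2 = (T.dist u v + 1) % 2 := by
  obtain ⟨p, hp, hlen⟩ := hT.isConnected.exists_path_of_dist u v
  cases p with
  | nil =>
      simp only [SimpleGraph.Walk.length_nil] at hlen
      rw [← hlen, (SimpleGraph.dist_eq_one_iff_adj).mpr h.symm]
  | @cons _ z _ h' p' =>
      by_cases hzw : z = w
      · subst hzw
        have h1 : p'.length = T.dist z v := tree_path_length hT p' hp.of_cons
        have h2 : T.dist u v = p'.length + 1 := by
          rw [← hlen]; simp [SimpleGraph.Walk.length_cons]
        omega
      · have hwsup : w ∉ (SimpleGraph.Walk.cons h' p').support := by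
          intro hmem
          have hq : (SimpleGraph.Walk.cons h' p').takeUntil w hmem
              = SimpleGraph.Walk.cons h .nil := by
            have huni := hT.IsAcyclic.path_unique
              ⟨(SimpleGraph.Walk.cons h' p').takeUntil w hmem, hp.takeUntil hmem⟩
              ⟨SimpleGraph.Walk.cons h .nil, by simp [h.ne]⟩
            exact congrArg Subtype.val huni
          have hs := (SimpleGraph.Walk.cons h' p').take_spec hmem
          rw [hq] at hs
          rw [SimpleGraph.Walk.cons_append, SimpleGraph.Walk.nil_append] at hs
          have hsup := congrArg SimpleGraph.Walk.support hs
          simp only [SimpleGraph.Walk.support_cons] at hsup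
          have h3 := List.cons_injective.eq_iff.mp hsup
          have h4 : ((SimpleGraph.Walk.cons h' p').dropUntil w hmem).support
              = w :: ((SimpleGraph.Walk.cons h' p').dropUntil w hmem).support.tail :=
            SimpleGraph.Walk.support_eq_cons _
          have h5 : p'.support = z :: p'.support.tail := SimpleGraph.Walk.support_eq_cons _
          rw [h4, h5] at h3
          exact hzw ((List.cons.injEq _ _ _ _).mp h3).1.symm
        have hpath : (SimpleGraph.Walk.cons h.symm (SimpleGraph.Walk.cons h' p')).IsPath :=
          hp.cons hwsup
        have h1 : (SimpleGraph.Walk.cons h.symm (SimpleGraph.Walk.cons h' p')).length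
            = T.dist w v := tree_path_length hT _ hpath
        have h2 : (SimpleGraph.Walk.cons h' p').length = T.dist u v := by rw [hlen]
        simp only [SimpleGraph.Walk.length_cons] at h1 h2
        omega

private lemma tree_walk_parity [DecidableEq V] (hT : T.IsTree) {u v : V} (p : T.Walk u v) :
    p.length % 2 = T.dist u v % 2 := by
  induction p with
  | nil => simp [SimpleGraph.dist_self]
  | @cons a b c h p ih =>
      have := tree_adj_dist_parity hT h c
      simp only [SimpleGraph.Walk.length_cons]
      omega

private lemma biPower_adj_of_adj [DecidableEq V] (hT : T.IsTree) {a b : V} (h : T.Adj a b) :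
    (T.biPower 3).Adj a b := by
  have h1 : T.dist a b = 1 := SimpleGraph.dist_eq_one_iff_adj.mpr h
  exact ⟨by rw [h1]; exact odd_one, by rw [h1]; omega⟩

private lemma biPower_adj_of_adj3 [DecidableEq V] (hT : T.IsTree) {a b c d : V}
    (h1 : T.Adj a b) (h2 : T.Adj b c) (h3 : T.Adj c d) : (T.biPower 3).Adj a d := by
  have hpar := tree_walk_parity hT
    (SimpleGraph.Walk.cons h1 (SimpleGraph.Walk.cons h2 (SimpleGraph.Walk.cons h3 .nil)))
  have hle := SimpleGraph.dist_le
    (SimpleGraph.Walk.cons h1 (SimpleGraph.Walk.cons h2 (SimpleGraph.Walk.cons h3 .nil)))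
  simp only [SimpleGraph.Walk.length_cons, SimpleGraph.Walk.length_nil] at hpar hle
  exact ⟨Nat.odd_iff.mpr (by omega), by omega⟩

private lemma biPower_remove_le [DecidableEq V] (hT : T.IsTree) (s : Set V) :
    (T.removeVerts s).biPower 3 ≤ T.biPower 3 := by
  intro u w hadj
  obtain ⟨ho, hle⟩ := hadj
  have hne : (T.removeVerts s).dist u w ≠ 0 := by
    intro h0; rw [h0] at ho; simp [Nat.odd_iff] at ho
  obtain ⟨p, hp⟩ := SimpleGraph.exists_walk_of_dist_ne_zero hne
  have hsub : T.removeVerts s ≤ T := fun a b hab => hab.1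
  have hql : (p.mapLe hsub).length = p.length := by
    simp [SimpleGraph.Walk.mapLe]
  have hpar := tree_walk_parity hT (p.mapLe hsub)
  rw [hql, hp] at hpar
  have hdle := SimpleGraph.dist_le (p.mapLe hsub)
  rw [hql, hp] at hdle
  rw [Nat.odd_iff] at ho
  exact ⟨Nat.odd_iff.mpr (by omega), le_trans hdle hle⟩

private lemma support_mapLe {G G' : SimpleGraph V} (h : G ≤ G') {u v : V} (p : G.Walk u v) :
    (p.mapLe h).support = p.support := by
  induction p with
  | nil => rfl
  | cons _ _ ih => simpa [SimpleGraph.Walk.mapLe] using ih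

private lemma removeVerts_reachable_mem {s : Set V} {a b : V}
    (h : (T.removeVerts s).Reachable a b) (ha : a ∈ s) : b = a := by
  obtain ⟨p⟩ := h
  cases p with
  | nil => rfl
  | cons h' _ => exact absurd ha h'.2.1

end Aux

/-- Let `T` be a finite tree with perfect matching `M` and `xy ∈ M`, and
suppose the components of `T - {x, y}` are `H 0, …, H (l-1)`, together with
`{x, y}` partitioning `V(T)`, each containing a matching edge
`(x2 i)(y2 i) ∈ M` with `x2 i` adjacent to `y`.  If each `(H i)_B^3` has a
Hamiltonian `(x2 i, y2 i)`-path `P i`, then (concatenating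
`x, y2 0 ⋯ x2 0, …, y2 (l-1) ⋯ x2 (l-1), y`) `T_B^3` has a Hamiltonian
`(x, y)`-path. -/
theorem concatenation_hamiltonian_path {V : Type*} [Fintype V] [DecidableEq V]
    (T : SimpleGraph V) (hT : T.IsTree) (M : T.Subgraph) (hM : M.IsPerfectMatching)
    (x y : V) (hxy : M.Adj x y)
    (l : ℕ) (x2 y2 : Fin l → V)
    (hx2x : ∀ i, x2 i ≠ x) (hadj : ∀ i, T.Adj y (x2 i)) (hM2 : ∀ i, M.Adj (x2 i) (y2 i))
    (H : Fin l → Set V)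
    (hH : ∀ i, H i = {b | (T.removeVerts {x, y}).Reachable (x2 i) b})
    (hdisj : ∀ i j, i ≠ j → Disjoint (H i) (H j))
    (hpart : (⋃ i, H i) ∪ {x, y} = Set.univ)
    (P : ∀ i, ((T.removeVerts {x, y}).biPower 3).Walk (x2 i) (y2 i))
    (hP : ∀ i, (∀ v ∈ H i, (P i).support.count v = 1) ∧ ∀ v ∈ (P i).support, v ∈ H i) :
    ∃ q : (T.biPower 3).Walk x y, q.IsHamiltonian := by
  classical
  have hTxy : T.Adj x y := M.adj_sub hxy
  have hxmem : x ∈ ({x, y} : Set V) := Set.mem_insert _ _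
  have hymem : y ∈ ({x, y} : Set V) := Set.mem_insert_iff.mpr (Or.inr rfl)
  have hxH : ∀ i, x ∉ H i := by
    intro i hxi
    rw [hH i] at hxi
    exact hx2x i (removeVerts_reachable_mem (Set.mem_setOf_eq ▸ hxi).symm hxmem)
  have hyH : ∀ i, y ∉ H i := by
    intro i hyi
    rw [hH i] at hyi
    exact (hadj i).ne (removeVerts_reachable_mem (Set.mem_setOf_eq ▸ hyi).symm hymem).symm
  have hy2H : ∀ i, y2 i ∈ H i := fun i => (hP i).2 _ (SimpleGraph.Walk.end_mem_support _)
  have hedge : ∀ (v : V), T.Adj v y → ∀ i, (T.biPower 3).Adj v (y2 i) :=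
    fun v hv i => biPower_adj_of_adj3 hT hv (hadj i) (M.adj_sub (hM2 i))
  have hle' := biPower_remove_le (s := ({x, y} : Set V)) hT
  have key : ∀ (L : List (Fin l)) (v : V), T.Adj v y →
      ∃ w : (T.biPower 3).Walk v y,
        w.support = v :: (((L.map fun j => (P j).support.reverse).flatten) ++ [y]) := by
    intro L
    induction L with
    | nil =>
        intro v hv
        exact ⟨SimpleGraph.Walk.cons (biPower_adj_of_adj hT hv) .nil, by simp⟩
    | cons i L' ih =>
        intro v hv
        obtain ⟨w', hw'⟩ := ih (x2 i) (hadj i).symm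
        refine ⟨SimpleGraph.Walk.cons (hedge v hv i)
          ((((P i).reverse).mapLe hle').append w'), ?_⟩
        rw [SimpleGraph.Walk.support_cons, SimpleGraph.Walk.support_append]
        have hm : ((((P i).reverse).mapLe hle')).support = (P i).support.reverse := by
          rw [support_mapLe, SimpleGraph.Walk.support_reverse]
        rw [hm, hw']
        simp [List.append_assoc]
  obtain ⟨q, hq⟩ := key (List.finRange l) x hTxy
  refine ⟨q, ?_⟩
  have hflat : ∀ u : V,
      List.count u ((List.finRange l).map fun j => (P j).support.reverse).flatten
        = ∑ j, List.count u (P j).support := by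
    intro u
    rw [List.count_flatten, Fin.sum_univ_def, List.map_map]
    congr 1
    apply List.map_congr_left
    intro j _
    simp [Function.comp]
  intro u
  rw [hq, List.count_cons, List.count_append, List.count_singleton, hflat]
  have hu : u ∈ (⋃ i, H i) ∪ ({x, y} : Set V) := hpart ▸ Set.mem_univ u
  rcases hu with hu | hu
  · obtain ⟨_, ⟨i, rfl⟩, hui⟩ := hu
    have hux : u ≠ x := fun h => hxH i (h ▸ hui)
    have huy : u ≠ y := fun h => hyH i (h ▸ hui)
    have hsum : ∑ j, List.count u (P j).support = 1 := by
      rw [Finset.sum_congr rfl (g := fun j => if j = i then 1 else 0) (fun j _ => ?_)]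
      · simp
      · by_cases hji : j = i
        · subst hji; simp [(hP j).1 u hui]
        · have : u ∉ (P j).support := fun hmem =>
            (hdisj j i hji).ne_of_mem ((hP j).2 u hmem) hui rfl
          simp [hji, List.count_eq_zero_of_not_mem this]
    rw [hsum]
    simp [Ne.symm hux, Ne.symm huy]
  · have hcnt : ∀ j, List.count u (P j).support = 0 := by
      intro j
      apply List.count_eq_zero_of_not_mem
      intro hmem
      rcases hu with rfl | rfl
      · exact hxH j ((hP j).2 u hmem)
      · exact hyH j ((hP j).2 u hmem)
    rw [Finset.sum_eq_zero fun j _ => hcnt j]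
    rcases hu with rfl | rfl
    · simp [hTxy.ne, hTxy.ne']
    · simp [hTxy.ne, hTxy.ne']
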